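/- If H is a graph on n vertices with at least one edge, then the independence complex of w(H) is a pseudo-manifold with boundary: there exists an independent set of size n−1 in w(H) that is contained in exactly one maximal independent set. -/

import Mathlib

def whisker {n : ℕ} (H : SimpleGraph (Fin n)) : SimpleGraph (Fin n ⊕ Fin n) :=
  SimpleGraph.fromRel (fun u v =>
    (∃ i j, H.Adj i j ∧ u = Sum.inl i ∧ v = Sum.inl j) ∨ ∃ i, u = Sum.inl i ∧ v = Sum.inr i)

def IsIndep {V : Type*} (G : SimpleGraph V) (S : Set V) : Prop :=
  ∀ u ∈ S, ∀ v ∈ S, ¬ G.Adj u v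

/-- A maximal independent set: an independent set not properly contained in
another independent set. -/
def MaxIndep {V : Type*} [DecidableEq V] (G : SimpleGraph V) (F : Finset V) : Prop :=
  IsIndep G ↑F ∧ ∀ F' : Finset V, IsIndep G ↑F' → F ⊆ F' → F = F'

lemma wa_inl_inl {n : ℕ} (H : SimpleGraph (Fin n)) (i j : Fin n) :
    (whisker H).Adj (Sum.inl i) (Sum.inl j) ↔ H.Adj i j := by
  constructor
  · rintro ⟨hne, (⟨i', j', h, hi, hj⟩ | ⟨k, hk, hk'⟩) | (⟨i', j', h, hi, hj⟩ | ⟨k, hk, hk'⟩)⟩ <;>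
      simp_all <;> exact h.symm
  · intro h
    exact ⟨by simp [H.ne_of_adj h], Or.inl (Or.inl ⟨i, j, h, rfl, rfl⟩)⟩

lemma wa_inl_inr {n : ℕ} (H : SimpleGraph (Fin n)) (i j : Fin n) :
    (whisker H).Adj (Sum.inl i) (Sum.inr j) ↔ i = j := by
  constructor
  · rintro ⟨hne, (⟨i', j', h, hi, hj⟩ | ⟨k, hk, hk'⟩) | (⟨i', j', h, hi, hj⟩ | ⟨k, hk, hk'⟩)⟩ <;>
      simp_all
  · rintro rfl
    exact ⟨by simp, Or.inl (Or.inr ⟨i, rfl, rfl⟩)⟩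

lemma wa_inr_inl {n : ℕ} (H : SimpleGraph (Fin n)) (i j : Fin n) :
    (whisker H).Adj (Sum.inr i) (Sum.inl j) ↔ j = i := by
  rw [SimpleGraph.adj_comm, wa_inl_inr]

lemma wa_inr_inr {n : ℕ} (H : SimpleGraph (Fin n)) (i j : Fin n) :
    ¬ (whisker H).Adj (Sum.inr i) (Sum.inr j) := by
  rintro ⟨hne, (⟨i', j', h, hi, hj⟩ | ⟨k, hk, hk'⟩) | (⟨i', j', h, hi, hj⟩ | ⟨k, hk, hk'⟩)⟩ <;>
    simp_all

/-- If `H` has at least one edge, the independence complex of `w(H)` is a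
pseudo-manifold with boundary: some independent set of size `n - 1` in `w(H)`
is contained in exactly one maximal independent set. -/
theorem ind_whisker_has_boundary {n : ℕ} (H : SimpleGraph (Fin n))
    (hedge : ∃ a b : Fin n, H.Adj a b) :
    ∃ F : Finset (Fin n ⊕ Fin n), IsIndep (whisker H) ↑F ∧ F.card = n - 1 ∧
      ∃! M : Finset (Fin n ⊕ Fin n), MaxIndep (whisker H) M ∧ F ⊆ M := by
  obtain ⟨a, b, hab⟩ := hedge
  have hne : a ≠ b := H.ne_of_adj hab
  classical
  set F : Finset (Fin n ⊕ Fin n) :=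
    insert (Sum.inl a) ((Finset.univ.filter (fun i => i ≠ a ∧ i ≠ b)).image Sum.inr) with hF
  set M : Finset (Fin n ⊕ Fin n) :=
    insert (Sum.inl a) ((Finset.univ.filter (fun i => i ≠ a)).image Sum.inr) with hM
  have hmemF : ∀ v, v ∈ F ↔ v = Sum.inl a ∨ ∃ i, i ≠ a ∧ i ≠ b ∧ v = Sum.inr i := by
    intro v; simp [hF, and_comm, eq_comm]
    tauto
  have hmemM : ∀ v, v ∈ M ↔ v = Sum.inl a ∨ ∃ i, i ≠ a ∧ v = Sum.inr i := by
    intro v; simp [hM, eq_comm]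
  have hFM : F ⊆ M := by
    intro v hv
    rw [hmemF] at hv; rw [hmemM]
    rcases hv with h | ⟨i, hi, _, hv⟩
    · exact Or.inl h
    · exact Or.inr ⟨i, hi, hv⟩
  have hMindep : IsIndep (whisker H) ↑M := by
    intro u hu v hv
    simp only [Finset.mem_coe] at hu hv
    rw [hmemM] at hu hv
    rcases hu with rfl | ⟨i, hi, rfl⟩ <;> rcases hv with rfl | ⟨j, hj, rfl⟩
    · exact fun h => (whisker H).irrefl h
    · rw [wa_inl_inr]; exact fun h => hj h.symm
    · rw [wa_inr_inl]; exact fun h => hi h.symm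
    · exact wa_inr_inr H i j
  have hFindep : IsIndep (whisker H) ↑F := fun u hu v hv =>
    hMindep u (hFM hu) v (hFM hv)
  have hMmax : MaxIndep (whisker H) M := by
    refine ⟨hMindep, fun F' hF' hMF' => ?_⟩
    apply Finset.Subset.antisymm hMF'
    intro v hv
    rw [hmemM]
    rcases v with i | i
    · left
      by_contra hia
      have hia' : i ≠ a := fun h => hia (by rw [h])
      have h1 : Sum.inr i ∈ F' := hMF' (by rw [hmemM]; exact Or.inr ⟨i, hia', rfl⟩)
      exact hF' _ hv _ h1 ((wa_inl_inr H i i).mpr rfl)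
    · right
      refine ⟨i, fun h => ?_, rfl⟩
      subst h
      exact hF' _ (hMF' (by rw [hmemM]; exact Or.inl rfl)) _ hv ((wa_inl_inr H i i).mpr rfl)
  have hcardF : F.card = n - 1 := by
    have h1 : Sum.inl a ∉ (Finset.univ.filter (fun i => i ≠ a ∧ i ≠ b)).image
        (Sum.inr : Fin n → Fin n ⊕ Fin n) := by simp
    rw [hF, Finset.card_insert_of_notMem h1,
      Finset.card_image_of_injective _ Sum.inr_injective]
    have : (Finset.univ.filter (fun i => i ≠ a ∧ i ≠ b)) = Finset.univ \ {a, b} := by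
      ext i; simp [and_comm]
    rw [this, Finset.card_sdiff_of_subset (by simp)]
    have hab2 : ({a, b} : Finset (Fin n)).card = 2 := by
      rw [Finset.card_insert_of_notMem (by simpa), Finset.card_singleton]
    rw [hab2, Finset.card_univ, Fintype.card_fin]
    have hn : 2 ≤ n := by
      have := Fintype.card_le_of_injective (fun p : Fin 2 => if p = 0 then a else b)
        (by intro x y hxy; fin_cases x <;> fin_cases y <;> simp_all)
      simpa using this
    omega
  refine ⟨F, hFindep, hcardF, M, ⟨hMmax, hFM⟩, ?_⟩
  rintro M' ⟨⟨hM'indep, hM'max⟩, hFM'⟩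
  have hsub : M' ⊆ M := by
    intro v hv
    rw [hmemM]
    rcases v with i | i
    · left
      by_contra hia
      have hia' : i ≠ a := fun h => hia (by rw [h])
      by_cases hib : i = b
      · subst hib
        exact hM'indep _ hv _ (hFM' (by rw [hmemF]; exact Or.inl rfl))
          ((wa_inl_inl H i a).mpr hab.symm)
      · have h1 : Sum.inr i ∈ M' := hFM' (by rw [hmemF]; exact Or.inr ⟨i, hia', hib, rfl⟩)
        exact hM'indep _ hv _ h1 ((wa_inl_inr H i i).mpr rfl)
    · right
      refine ⟨i, fun h => ?_, rfl⟩
      subst h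
      exact hM'indep _ (hFM' (by rw [hmemF]; exact Or.inl rfl)) _ hv
        ((wa_inl_inr H i i).mpr rfl)
  exact hM'max M hMindep hsub
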